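/- Let X be a topological space, S ⊆ Σ ⊆ X subsets (with subspace topologies), s₀ ∈ S, and let i : S ↪ Σ, m : Σ ↪ X and j = m ∘ i : S ↪ X denote the inclusions. Let φ : E → X be a covering map and e₀ ∈ φ⁻¹({s₀}). Assume: (a) m_# : π₁(Σ, s₀) → π₁(X, s₀) is injective; (b) φ_#(π₁(E, e₀)) ⊆ j_#(π₁(S, s₀)) as subgroups of π₁(X, s₀); and (c) there exists a continuous map σ : Σ → E with φ ∘ σ = m and σ(s₀) = e₀ (i.e., the inclusion of Σ lifts through φ). Then i_# : π₁(S, s₀) → π₁(Σ, s₀) is surjective. -/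

import Mathlib

open CategoryTheory

/-- The homomorphism of fundamental groups induced by a continuous map. -/
noncomputable def inducedPi1Map {A X : Type} [TopologicalSpace A] [TopologicalSpace X]
    (f : C(A, X)) (a : A) :
    FundamentalGroup A a →* FundamentalGroup X (f a) :=
  Functor.mapEnd (⟨a⟩ : FundamentalGroupoid (TopCat.of A))
    (FundamentalGroupoid.fundamentalGroupoidFunctor.map (X := TopCat.of A) (Y := TopCat.of X) (TopCat.ofHom f))

/-- Let `S ⊆ Sig ⊆ X` with inclusions `i : S ↪ Sig`, `m : Sig ↪ X`,
`j = m ∘ i`, and basepoint `s₀ = φ e₀ ∈ S` for a covering map `φ : E → X`. If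
(a) `m_#` is injective, (b) `φ_#(π₁(E,e₀)) ⊆ j_#(π₁(S,s₀))`, and (c) the inclusion of
`Sig` lifts through `φ` via a continuous `σ` with `σ s₀ = e₀`, then
`i_# : π₁(S,s₀) → π₁(Sig,s₀)` is surjective. -/
theorem L {A B X : Type} [TopologicalSpace A] [TopologicalSpace B] [TopologicalSpace X]
    (f : C(A,B)) (g : C(B,X)) (a : A) :
    inducedPi1Map (g.comp f) a = (inducedPi1Map g (f a)).comp (inducedPi1Map f a) := by
  ext γ
  show (FundamentalGroupoid.map (g.comp f)).map γ =
    (FundamentalGroupoid.map g).map ((FundamentalGroupoid.map f).map γ)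
  exact Quotient.inductionOn (motive := fun γ : Path.Homotopic.Quotient a a =>
    (FundamentalGroupoid.map (g.comp f)).map γ =
    (FundamentalGroupoid.map g).map ((FundamentalGroupoid.map f).map γ)) γ (fun _ => rfl)

theorem castL {A X : Type} [TopologicalSpace A] [TopologicalSpace X] (f : C(A,X)) {a b : A}
    (h : a = b) (γ : FundamentalGroup A a) :
    inducedPi1Map f b (h ▸ γ) = congrArg (f : A → X) h ▸ inducedPi1Map f a γ := by
  subst h; rfl

theorem castC {A X : Type} [TopologicalSpace A] [TopologicalSpace X] (f g : C(A,X)) (h : f = g)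
    (a : A) (γ : FundamentalGroup A a) :
    congrArg (fun F : C(A,X) => F a) h ▸ inducedPi1Map f a γ = inducedPi1Map g a γ := by
  subst h; rfl

theorem pi1_surjective_of_section
    {E X : Type} [TopologicalSpace E] [TopologicalSpace X]
    (S Sig : Set X) (hSSig : S ⊆ Sig)
    (φ : E → X) (hφ : IsCoveringMap φ)
    (e₀ : E) (hs₀ : φ e₀ ∈ S)
    (hinj : Function.Injective
      (inducedPi1Map (⟨Subtype.val, continuous_subtype_val⟩ : C(↥Sig, X))
        ⟨φ e₀, hSSig hs₀⟩))
    (hsub : (inducedPi1Map (⟨φ, hφ.continuous⟩ : C(E, X)) e₀).range ≤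
      (inducedPi1Map (⟨Subtype.val, continuous_subtype_val⟩ : C(↥S, X)) ⟨φ e₀, hs₀⟩).range)
    (σ : C(↥Sig, E)) (hσ : ∀ x : ↥Sig, φ (σ x) = (x : X))
    (hσ₀ : σ ⟨φ e₀, hSSig hs₀⟩ = e₀) :
    Function.Surjective
      (inducedPi1Map (⟨Set.inclusion hSSig, continuous_inclusion hSSig⟩ : C(↥S, ↥Sig))
        ⟨φ e₀, hs₀⟩) := by
  have hmC : (⟨φ, hφ.continuous⟩ : C(E, X)).comp σ =
      (⟨Subtype.val, continuous_subtype_val⟩ : C(↥Sig, X)) := ContinuousMap.ext hσ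
  intro γ
  have key : inducedPi1Map (⟨Subtype.val, continuous_subtype_val⟩ : C(↥Sig, X))
      ⟨φ e₀, hSSig hs₀⟩ γ ∈ (inducedPi1Map (⟨φ, hφ.continuous⟩ : C(E, X)) e₀).range := by
    refine ⟨hσ₀ ▸ inducedPi1Map σ ⟨φ e₀, hSSig hs₀⟩ γ, ?_⟩
    rw [castL (⟨φ, hφ.continuous⟩ : C(E, X)) hσ₀]
    have h1 : inducedPi1Map (⟨φ, hφ.continuous⟩ : C(E, X)) (σ ⟨φ e₀, hSSig hs₀⟩)
        (inducedPi1Map σ ⟨φ e₀, hSSig hs₀⟩ γ) =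
        inducedPi1Map ((⟨φ, hφ.continuous⟩ : C(E, X)).comp σ) ⟨φ e₀, hSSig hs₀⟩ γ :=
      (DFunLike.congr_fun (L σ _ _) γ).symm
    rw [h1]
    exact castC _ _ hmC _ γ
  obtain ⟨δ, hδ⟩ := hsub key
  refine ⟨δ, hinj ?_⟩
  have h2 : inducedPi1Map (⟨Subtype.val, continuous_subtype_val⟩ : C(↥S, X)) ⟨φ e₀, hs₀⟩ δ =
      inducedPi1Map (⟨Subtype.val, continuous_subtype_val⟩ : C(↥Sig, X)) ⟨φ e₀, hSSig hs₀⟩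
      (inducedPi1Map (⟨Set.inclusion hSSig, continuous_inclusion hSSig⟩ : C(↥S, ↥Sig))
        ⟨φ e₀, hs₀⟩ δ) :=
    DFunLike.congr_fun (L (⟨Set.inclusion hSSig, continuous_inclusion hSSig⟩ : C(↥S, ↥Sig))
      (⟨Subtype.val, continuous_subtype_val⟩ : C(↥Sig, X)) ⟨φ e₀, hs₀⟩) δ
  exact h2.symm.trans hδ
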